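/- (Proposition 6, case a < 0.) Suppose π(θ, e) = π₀(e) − θ·(a e + b) with a < 0, for a twice continuously differentiable, strictly concave π₀ : E → ℝ, with π(θ,0) < π(θ,ē) for all θ ∈ Θ, and the density f is continuously differentiable and strictly positive on the interior of Θ. If there exists θ_▲ ∈ Θ such that e̲(θ) = ē for all θ ∈ [θ_▲, θ̄] and f is nondecreasing on [θ̲, θ_▲], then full disclosure Pareto dominates every other policy: for every admissible policy d, Π(d) ≤ Π(d_id) and Γ(d) ≥ Γ(d_id); consequently, any admissible efficient policy d satisfies Π(d) = Π(d_id) and Γ(d) = Γ(d_id). -/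

import Mathlib

open Set MeasureTheory

noncomputable section

/-- The set of belief-compatible emission levels under disclosure policy `d`,
on the emission space `E = [0, ebar]`. -/
def BCset (ebar : ℝ) (d : ℝ → ℝ) : Set ℝ :=
  {e | e ∈ Icc 0 ebar ∧ ∀ e' ∈ Icc 0 ebar, d e' = d e → e' ≤ e}

/-- `d` is more transparent than `d'`: the fibers of `d` refine those of `d'`. -/
def MoreTransparent (ebar : ℝ) (d d' : ℝ → ℝ) : Prop :=
  ∀ e₁ ∈ Icc (0:ℝ) ebar, ∀ e₂ ∈ Icc (0:ℝ) ebar, d e₁ = d e₂ → d' e₁ = d' e₂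

/-- A policy is admissible if for every type `θ ∈ Θ`, the profit `π θ ·`
attains a maximum on the belief-compatible set. -/
def Admissible (ebar θl θh : ℝ) (π : ℝ → ℝ → ℝ) (d : ℝ → ℝ) : Prop :=
  ∀ θ ∈ Icc θl θh, ∃ e ∈ BCset ebar d, ∀ e' ∈ BCset ebar d, π θ e' ≤ π θ e

/-- The maximized profit `π_d(θ)` of type `θ` under policy `d`. -/
def profitFn (ebar : ℝ) (π : ℝ → ℝ → ℝ) (d : ℝ → ℝ) (θ : ℝ) : ℝ :=
  sSup (π θ '' BCset ebar d)

/-- The equilibrium emission `γ_d(θ)`: the least maximizer of `π θ ·` on the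
belief-compatible set. -/
def emissionFn (ebar : ℝ) (π : ℝ → ℝ → ℝ) (d : ℝ → ℝ) (θ : ℝ) : ℝ :=
  sInf {e | e ∈ BCset ebar d ∧ ∀ e' ∈ BCset ebar d, π θ e' ≤ π θ e}

/-- Expected profit `Π(d) = ∫ π_d(θ) f(θ) dθ`. -/
def ExpProfit (ebar θl θh : ℝ) (π : ℝ → ℝ → ℝ) (f : ℝ → ℝ) (d : ℝ → ℝ) : ℝ :=
  ∫ θ in Icc θl θh, profitFn ebar π d θ * f θ

/-- Expected emission `Γ(d) = ∫ γ_d(θ) f(θ) dθ`. -/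
def ExpEmission (ebar θl θh : ℝ) (π : ℝ → ℝ → ℝ) (f : ℝ → ℝ) (d : ℝ → ℝ) : ℝ :=
  ∫ θ in Icc θl θh, emissionFn ebar π d θ * f θ

/-- `d` is Pareto efficient: no admissible policy yields weakly higher expected
profit and weakly lower expected emission with at least one strict. -/
def Efficient (ebar θl θh : ℝ) (π : ℝ → ℝ → ℝ) (f : ℝ → ℝ) (d : ℝ → ℝ) : Prop :=
  ¬ ∃ d' : ℝ → ℝ, Admissible ebar θl θh π d' ∧
      ExpProfit ebar θl θh π f d ≤ ExpProfit ebar θl θh π f d' ∧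
      ExpEmission ebar θl θh π f d' ≤ ExpEmission ebar θl θh π f d ∧
      (ExpProfit ebar θl θh π f d < ExpProfit ebar θl θh π f d' ∨
        ExpEmission ebar θl θh π f d' < ExpEmission ebar θl θh π f d)

namespace Prop6

open Set MeasureTheory Function

variable {ebar θl θh a b : ℝ} {π0 : ℝ → ℝ} {π : ℝ → ℝ → ℝ} {d : ℝ → ℝ}

lemma bc_subset : BCset ebar d ⊆ Icc 0 ebar := fun _ he => he.1

lemma bc_top (h0 : 0 ≤ ebar) : ebar ∈ BCset ebar d :=
  ⟨⟨h0, le_rfl⟩, fun _ he' _ => he'.2⟩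

lemma bc_id (h0 : 0 ≤ ebar) : BCset ebar (fun e => e) = Icc 0 ebar := by
  ext e
  constructor
  · exact fun he => he.1
  · exact fun he => ⟨he, fun e' _ h => le_of_eq h⟩

lemma pi_cont (hπ : ∀ θ e, π θ e = π0 e - θ * (a * e + b))
    (hc : ContinuousOn π0 (Icc 0 ebar)) (θ : ℝ) :
    ContinuousOn (π θ) (Icc 0 ebar) := by
  have : ContinuousOn (fun e => π0 e - θ * (a * e + b)) (Icc 0 ebar) :=
    hc.sub (Continuous.continuousOn (by continuity))
  exact this.congr fun e _ => (hπ θ e)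

lemma pi_sconc (hπ : ∀ θ e, π θ e = π0 e - θ * (a * e + b))
    (hconc : StrictConcaveOn ℝ (Icc 0 ebar) π0) (θ : ℝ) :
    StrictConcaveOn ℝ (Icc 0 ebar) (π θ) := by
  refine ⟨hconc.1, fun x hx y hy hxy s t hs ht hst => ?_⟩
  have h1 := hconc.2 hx hy hxy hs ht hst
  simp only [smul_eq_mul, hπ] at h1 ⊢
  have e1 : θ * (a * (s * x + t * y) + b)
      = s * (θ * (a * x + b)) + t * (θ * (a * y + b)) := by
    linear_combination (-(θ * b)) * hst
  linarith [h1]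

/-- the argmax set -/
def AM (ebar : ℝ) (π : ℝ → ℝ → ℝ) (d : ℝ → ℝ) (θ : ℝ) : Set ℝ :=
  {e | e ∈ BCset ebar d ∧ ∀ e' ∈ BCset ebar d, π θ e' ≤ π θ e}

lemma am_three {θ x y z : ℝ} (hsc : StrictConcaveOn ℝ (Icc 0 ebar) (π θ))
    (hx : x ∈ AM ebar π d θ) (hy : y ∈ AM ebar π d θ) (hz : z ∈ AM ebar π d θ)
    (hxy : x < y) (hyz : y < z) : False := by
  have hvxy : π θ x = π θ y := le_antisymm (hy.2 x hx.1) (hx.2 y hy.1)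
  have hvyz : π θ y = π θ z := le_antisymm (hz.2 y hy.1) (hy.2 z hz.1)
  have hxz : x < z := hxy.trans hyz
  set s : ℝ := (z - y) / (z - x) with hs
  set t : ℝ := (y - x) / (z - x) with ht
  have hzx : (0:ℝ) < z - x := by linarith
  have hs0 : 0 < s := div_pos (by linarith) hzx
  have ht0 : 0 < t := div_pos (by linarith) hzx
  have hst : s + t = 1 := by
    rw [hs, ht, ← add_div, div_eq_one_iff_eq hzx.ne']; ring
  have hyeq : s * x + t * z = y := by
    rw [hs, ht]; field_simp; ring
  have h3 : s * π θ x + t * π θ z < π θ y := by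
    have h2 := hsc.2 (bc_subset hx.1) (bc_subset hz.1) hxz.ne hs0 ht0 hst
    simpa [smul_eq_mul, hyeq] using h2
  rw [hvxy] at h3
  rw [← hvyz] at h3
  have h4 : s * π θ y + t * π θ y = π θ y := by rw [← add_mul, hst, one_mul]
  linarith

lemma argmax_isLeast {θ : ℝ} (hsc : StrictConcaveOn ℝ (Icc 0 ebar) (π θ))
    (h0 : (AM ebar π d θ).Nonempty) :
    IsLeast (AM ebar π d θ) (emissionFn ebar π d θ) := by
  obtain ⟨e0, he0⟩ := h0
  have hL : ∃ m, IsLeast (AM ebar π d θ) m := by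
    by_cases hex : ∃ e1 ∈ AM ebar π d θ, e1 < e0
    · obtain ⟨e1, he1, hlt⟩ := hex
      refine ⟨e1, he1, fun e he => ?_⟩
      by_contra hc
      push_neg at hc
      rcases lt_trichotomy e0 e with h | h | h
      · exact am_three hsc he1 he0 he hlt h
      · exact absurd (h ▸ hlt) (not_lt.2 hc.le)
      · rcases lt_trichotomy e1 e with h2 | h2 | h2
        · exact am_three hsc he1 he he0 h2 h
        · exact absurd h2 hc.ne'
        · exact am_three hsc he he1 he0 h2 hlt
    · push_neg at hex
      exact ⟨e0, he0, fun e he => hex e he⟩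
  obtain ⟨m, hm⟩ := hL
  have he : emissionFn ebar π d θ = sInf (AM ebar π d θ) := rfl
  rw [he, hm.csInf_eq]
  exact hm

lemma bddAbove_img (hcont : ContinuousOn (π θ) (Icc 0 ebar)) :
    BddAbove (π θ '' BCset ebar d) :=
  ((isCompact_Icc.image_of_continuousOn hcont).bddAbove).mono (Set.image_mono bc_subset)

lemma profitFn_eq {θ : ℝ} (hL : IsLeast (AM ebar π d θ) (emissionFn ebar π d θ)) :
    profitFn ebar π d θ = π θ (emissionFn ebar π d θ) := by
  refine IsGreatest.csSup_eq ⟨Set.mem_image_of_mem _ hL.1.1, ?_⟩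
  rintro _ ⟨e, heS, rfl⟩
  exact hL.1.2 e heS

lemma admissible_id (h0 : 0 ≤ ebar) (hcont : ∀ θ, ContinuousOn (π θ) (Icc 0 ebar)) :
    Admissible ebar θl θh π (fun e => e) := by
  intro θ _
  obtain ⟨e, he, hmax⟩ := isCompact_Icc.exists_isMaxOn (Set.nonempty_Icc.2 h0) (hcont θ)
  refine ⟨e, ?_, ?_⟩ <;> rw [bc_id h0]
  · exact he
  · exact fun e' he' => hmax he'

lemma argmax_top {θ : ℝ} (h0 : 0 ≤ ebar)
    (htop : IsLeast {e | e ∈ Icc 0 ebar ∧ π θ ebar ≤ π θ e} ebar) :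
    IsLeast (AM ebar π d θ) ebar := by
  constructor
  · refine ⟨bc_top h0, fun e' he' => ?_⟩
    by_contra hc
    push_neg at hc
    have h1 : ebar ≤ e' := htop.2 ⟨bc_subset he', hc.le⟩
    have h2 : e' ≤ ebar := (bc_subset he').2
    rw [le_antisymm h2 h1] at hc
    exact lt_irrefl _ hc
  · intro m hm
    exact htop.2 ⟨bc_subset hm.1, hm.2 ebar (bc_top h0)⟩

end Prop6
namespace Prop6

open Set MeasureTheory Function Filter Topology

variable {ebar θl θh a b : ℝ} {π0 : ℝ → ℝ} {π : ℝ → ℝ → ℝ} {d : ℝ → ℝ}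

lemma gamma_spec (hπ : ∀ θ e, π θ e = π0 e - θ * (a * e + b))
    (hconc : StrictConcaveOn ℝ (Icc 0 ebar) π0)
    (hadm : Admissible ebar θl θh π d) {θ : ℝ} (hθ : θ ∈ Icc θl θh) :
    IsLeast (AM ebar π d θ) (emissionFn ebar π d θ) := by
  apply argmax_isLeast (pi_sconc hπ hconc θ)
  obtain ⟨e, he, hm⟩ := hadm θ hθ
  exact ⟨e, he, hm⟩

lemma gamma_monoOn (ha : a < 0) (hπ : ∀ θ e, π θ e = π0 e - θ * (a * e + b))
    (hconc : StrictConcaveOn ℝ (Icc 0 ebar) π0)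
    (hadm : Admissible ebar θl θh π d) :
    MonotoneOn (emissionFn ebar π d) (Icc θl θh) := by
  intro θ1 h1 θ2 h2 h12
  rcases eq_or_lt_of_le h12 with rfl | hlt
  · exact le_rfl
  have s1 := gamma_spec hπ hconc hadm h1
  have s2 := gamma_spec hπ hconc hadm h2
  by_contra hc
  push_neg at hc
  have q1 : π θ1 (emissionFn ebar π d θ2) ≤ π θ1 (emissionFn ebar π d θ1) :=
    s1.1.2 _ s2.1.1
  have q2 : π θ2 (emissionFn ebar π d θ1) ≤ π θ2 (emissionFn ebar π d θ2) :=
    s2.1.2 _ s1.1.1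
  simp only [hπ] at q1 q2
  nlinarith [mul_pos (sub_pos.2 hlt) (sub_pos.2 hc)]

lemma subgrad (hπ : ∀ θ e, π θ e = π0 e - θ * (a * e + b))
    (hconc : StrictConcaveOn ℝ (Icc 0 ebar) π0)
    (hcont0 : ContinuousOn π0 (Icc 0 ebar))
    (hadm : Admissible ebar θl θh π d) {θ θ' : ℝ}
    (hθ : θ ∈ Icc θl θh) (hθ' : θ' ∈ Icc θl θh) :
    profitFn ebar π d θ + (θ' - θ) * (-(a * emissionFn ebar π d θ + b))
      ≤ profitFn ebar π d θ' := by
  have s := gamma_spec hπ hconc hadm hθ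
  have h1 : profitFn ebar π d θ = π θ (emissionFn ebar π d θ) := profitFn_eq s
  have h2 : π θ' (emissionFn ebar π d θ) ≤ profitFn ebar π d θ' :=
    le_csSup (bddAbove_img (pi_cont hπ hcont0 θ')) (Set.mem_image_of_mem _ s.1.1)
  calc profitFn ebar π d θ + (θ' - θ) * (-(a * emissionFn ebar π d θ + b))
      = π θ' (emissionFn ebar π d θ) := by
        rw [h1, hπ θ, hπ θ']; ring
    _ ≤ profitFn ebar π d θ' := h2

lemma sbound {e : ℝ} (he : e ∈ Icc 0 ebar) : |(-(a * e + b))| ≤ |a| * ebar + |b| := by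
  rw [abs_neg]
  calc |a * e + b| ≤ |a * e| + |b| := abs_add_le _ _
    _ = |a| * e + |b| := by rw [abs_mul, abs_of_nonneg he.1]
    _ ≤ |a| * ebar + |b| := by
        have := mul_le_mul_of_nonneg_left he.2 (abs_nonneg a)
        linarith

lemma profit_lip (hπ : ∀ θ e, π θ e = π0 e - θ * (a * e + b))
    (hconc : StrictConcaveOn ℝ (Icc 0 ebar) π0)
    (hcont0 : ContinuousOn π0 (Icc 0 ebar))
    (hadm : Admissible ebar θl θh π d) {t w : ℝ}
    (ht : t ∈ Icc θl θh) (hw : w ∈ Icc θl θh) :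
    |profitFn ebar π d w - profitFn ebar π d t| ≤ (|a| * ebar + |b|) * |w - t| := by
  have key : ∀ u v : ℝ, u ∈ Icc θl θh → v ∈ Icc θl θh → u ≤ v →
      |profitFn ebar π d v - profitFn ebar π d u| ≤ (|a| * ebar + |b|) * |v - u| := by
    intro u v hu hv huv
    have g1 := subgrad hπ hconc hcont0 hadm hu hv
    have g2 := subgrad hπ hconc hcont0 hadm hv hu
    have b1 := sbound (ebar := ebar) (a := a) (b := b)
      (bc_subset (gamma_spec hπ hconc hadm hu).1.1)
    have b2 := sbound (ebar := ebar) (a := a) (b := b)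
      (bc_subset (gamma_spec hπ hconc hadm hv).1.1)
    rw [abs_le] at b1 b2
    rw [abs_of_nonneg (sub_nonneg.2 huv), abs_le]
    constructor
    · nlinarith [mul_le_mul_of_nonneg_left b1.1 (sub_nonneg.2 huv)]
    · nlinarith [mul_le_mul_of_nonneg_left b2.2 (sub_nonneg.2 huv)]
  rcases le_total t w with h | h
  · exact key t w ht hw h
  · have h2 := key w t hw ht h
    rw [abs_sub_comm] at h2
    rwa [abs_sub_comm t w] at h2

lemma profit_contOn (hπ : ∀ θ e, π θ e = π0 e - θ * (a * e + b))
    (hconc : StrictConcaveOn ℝ (Icc 0 ebar) π0)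
    (hcont0 : ContinuousOn π0 (Icc 0 ebar))
    (hadm : Admissible ebar θl θh π d) (h0 : 0 ≤ ebar) :
    ContinuousOn (profitFn ebar π d) (Icc θl θh) := by
  apply LipschitzOnWith.continuousOn (K := Real.toNNReal (|a| * ebar + |b| + 1))
  rw [lipschitzOnWith_iff_dist_le_mul]
  intro x hx y hy
  rw [Real.dist_eq, Real.dist_eq]
  have h := profit_lip hπ hconc hcont0 hadm hy hx
  have hC : (0:ℝ) ≤ |a| * ebar + |b| + 1 := by
    have := mul_nonneg (abs_nonneg a) h0
    linarith [abs_nonneg b]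
  rw [Real.coe_toNNReal _ hC]
  nlinarith [abs_nonneg (x - y), h]
end Prop6
namespace Prop6

open Set MeasureTheory Function Filter Topology

variable {ebar θl θh a b : ℝ} {π0 : ℝ → ℝ} {π : ℝ → ℝ → ℝ} {d : ℝ → ℝ}

lemma profit_hasDeriv (hπ : ∀ θ e, π θ e = π0 e - θ * (a * e + b))
    (hconc : StrictConcaveOn ℝ (Icc 0 ebar) π0)
    (hcont0 : ContinuousOn π0 (Icc 0 ebar))
    (hadm : Admissible ebar θl θh π d) (h0 : 0 ≤ ebar)
    (γe : ℝ → ℝ) (hγe : ∀ t ∈ Icc θl θh, γe t = emissionFn ebar π d t)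
    (hγm : Monotone γe) {t : ℝ} (ht : t ∈ Ioo θl θh) :
    HasDerivWithinAt (profitFn ebar π d) (-(a * rightLim γe t + b)) (Ioi t) t := by
  set V := profitFn ebar π d with hV
  have htIcc : t ∈ Icc θl θh := ⟨ht.1.le, ht.2.le⟩
  have htθh : t < θh := ht.2
  have hsubset : Ioc t θh ⊆ Icc θl θh := fun u hu => ⟨ht.1.le.trans hu.1.le, hu.2⟩
  -- subgradient inequality in terms of γe
  have subgrad' : ∀ u ∈ Icc θl θh, ∀ w ∈ Icc θl θh,
      V w + (u - w) * (-(a * γe w + b)) ≤ V u := by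
    intro u hu w hw
    have := subgrad hπ hconc hcont0 hadm hw hu
    rwa [hγe w hw]
  have hVcont : ContinuousOn V (Icc θl θh) := profit_contOn hπ hconc hcont0 hadm h0
  -- convergence of the slope-bound function
  have tendsto_su : Tendsto (fun u => -(a * γe u + b)) (𝓝[>] t)
      (𝓝 (-(a * rightLim γe t + b))) := by
    have h1 : Tendsto γe (𝓝[>] t) (𝓝 (rightLim γe t)) := hγm.tendsto_rightLim t
    exact ((h1.const_mul a).add_const b).neg
  have hVt : Tendsto V (𝓝[>] t) (𝓝 (V t)) := by
    rw [← nhdsWithin_Ioc_eq_nhdsGT htθh]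
    exact (hVcont.continuousWithinAt htIcc).mono_left (nhdsWithin_mono _ hsubset)
  -- step1 : lower subgradient bound with right limit
  have step1 : ∀ u ∈ Ioc t θh, V t + (u - t) * (-(a * rightLim γe t + b)) ≤ V u := by
    intro u hu
    have hid : Tendsto (fun w : ℝ => w) (𝓝[>] t) (𝓝 t) :=
      (continuous_id.tendsto t).mono_left nhdsWithin_le_nhds
    have htend : Tendsto (fun w => V w + (u - w) * (-(a * γe w + b))) (𝓝[>] t)
        (𝓝 (V t + (u - t) * (-(a * rightLim γe t + b)))) :=
      hVt.add ((tendsto_const_nhds.sub hid).mul tendsto_su)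
    refine le_of_tendsto htend ?_
    filter_upwards [Ioc_mem_nhdsGT_of_mem ⟨le_rfl, htθh⟩] with w hw
    exact subgrad' u (hsubset hu) w (hsubset hw)
  -- conclude via squeeze of slopes
  rw [hasDerivWithinAt_iff_tendsto_slope]
  have hIoi : Ioi t \ {t} = Ioi t := Set.diff_singleton_eq_self (notMem_Ioi.2 le_rfl)
  rw [hIoi]
  apply tendsto_of_tendsto_of_tendsto_of_le_of_le' tendsto_const_nhds tendsto_su
  · filter_upwards [Ioc_mem_nhdsGT_of_mem ⟨le_rfl, htθh⟩] with u hu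
    rw [slope_def_field]
    rw [le_div_iff₀ (sub_pos.2 hu.1)]
    have := step1 u hu
    linarith
  · filter_upwards [Ioc_mem_nhdsGT_of_mem ⟨le_rfl, htθh⟩] with u hu
    rw [slope_def_field]
    rw [div_le_iff₀ (sub_pos.2 hu.1)]
    have := subgrad' t htIcc u (hsubset hu)
    linarith

end Prop6
namespace Prop6

open Set MeasureTheory Function Filter Topology intervalIntegral

/-- If `g1, g2` are monotone right-continuous, `f` is `C¹` nonneg and nondecreasing on
`[θl, θb]`, and all tail integrals `∫_u^{θb} (g1 - g2)` are nonnegative, then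
`∫_{(θl,θb)} (g1 - g2) f ≥ 0`. -/
lemma key_integral_nonneg {θl θb θh : ℝ} (g1 g2 f : ℝ → ℝ)
    (hg1 : Monotone g1) (hg2 : Monotone g2)
    (hrc1 : ∀ u, ContinuousWithinAt g1 (Ici u) u)
    (hrc2 : ∀ u, ContinuousWithinAt g2 (Ici u) u)
    (hlb : θl ≤ θb) (hbh : θb ≤ θh)
    (hfC1 : ContDiffOn ℝ 1 f (Ioo θl θh))
    (hf0 : ∀ θ ∈ Icc θl θh, 0 ≤ f θ)
    (hmono : MonotoneOn f (Icc θl θb))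
    (hfi : IntegrableOn (fun t => (g1 t - g2 t) * f t) (Ioo θl θb))
    (HA : ∀ u ∈ Icc θl θb, 0 ≤ ∫ t in u..θb, (g1 t - g2 t)) :
    0 ≤ ∫ t in Ioo θl θb, (g1 t - g2 t) * f t := by
  rcases le_or_gt θb θl with hbl | hlb'
  · rw [Ioo_eq_empty (fun h => absurd hbl (not_le.2 h))]
    simp
  -- notation
  set h : ℝ → ℝ := fun t => g1 t - g2 t with hh
  set H : ℝ → ℝ := fun u => ∫ t in u..θb, h t with hH
  have hint_h : ∀ x y : ℝ, IntervalIntegrable h volume x y := fun x y =>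
    (hg1.intervalIntegrable).sub (hg2.intervalIntegrable)
  have hIcc_int : IntegrableOn h (Icc θl θb) := by
    have := hint_h θl θb
    rwa [intervalIntegrable_iff_integrableOn_Icc_of_le hlb] at this
  have Hcont : ContinuousOn H (Icc θl θb) := by
    have := intervalIntegral.continuousOn_primitive_interval_left
      (by rwa [uIcc_of_le hlb] : IntegrableOn h (uIcc θl θb))
    rwa [uIcc_of_le hlb] at this
  -- step B : integration by parts bound on compact subintervals
  have stepB : ∀ x y : ℝ, θl < x → x ≤ y → y < θb →
      -(H y * f θb) ≤ ∫ t in x..y, h t * f t := by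
    intro x y hx hxy hyb
    have hxmem : x ∈ Icc θl θb := ⟨hx.le, hxy.trans hyb.le⟩
    have hymem : y ∈ Icc θl θb := ⟨hx.le.trans hxy, hyb.le⟩
    have hops : Icc x y ⊆ Ioo θl θb := fun u hu => ⟨hx.trans_le hu.1, hu.2.trans_lt hyb⟩
    have hops' : Icc x y ⊆ Ioo θl θh := fun u hu =>
      ⟨(hops hu).1, lt_of_lt_of_le (hops hu).2 hbh⟩
    have hfcont : ContinuousOn f (Icc x y) := (hfC1.continuousOn).mono hops'
    have hf'cont : ContinuousOn (deriv f) (Icc x y) :=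
      (hfC1.continuousOn_deriv_of_isOpen isOpen_Ioo le_rfl).mono hops'
    have hfd : ∀ u ∈ Icc x y, HasDerivAt f (deriv f u) u := fun u hu =>
      ((hfC1.differentiableOn one_ne_zero).differentiableAt
        (isOpen_Ioo.mem_nhds (hops' hu))).hasDerivAt
    have hf'0 : ∀ u ∈ Icc x y, 0 ≤ deriv f u := by
      intro u hu
      have hub : u < θb := (hops hu).2
      have hslope : Tendsto (slope f u) (𝓝[>] u) (𝓝 (deriv f u)) :=
        (hasDerivAt_iff_tendsto_slope.1 (hfd u hu)).mono_left
          (nhdsWithin_mono _ (fun v hv => ne_of_gt hv))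
      refine ge_of_tendsto hslope ?_
      filter_upwards [Ioo_mem_nhdsGT_of_mem ⟨le_rfl, hub⟩] with v hv
      rw [slope_def_field]
      apply div_nonneg _ (sub_pos.2 hv.1).le
      have humem : u ∈ Icc θl θb := ⟨hx.le.trans hu.1, hub.le⟩
      have hvmem : v ∈ Icc θl θb := ⟨humem.1.trans hv.1.le, hv.2.le⟩
      exact sub_nonneg.2 (hmono humem hvmem hv.1.le)
    have hmeas1 : Measurable h := (hg1.measurable).sub (hg2.measurable)
    have hHd : ∀ u ∈ Ioo x y, HasDerivWithinAt H (-(h u)) (Ioi u) u := by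
      intro u _
      have : HasDerivWithinAt H (-(h u)) (Ici u) u :=
        intervalIntegral.integral_hasDerivWithinAt_left (hint_h u θb) (s := Ici u) (t := Ioi u)
          ⟨univ, univ_mem, (hmeas1.aestronglyMeasurable)⟩
          (((hrc1 u).sub (hrc2 u)).mono Ioi_subset_Ici_self)
      exact this.mono Ioi_subset_Ici_self
    have hKd : ∀ u ∈ Ioo x y,
        HasDerivWithinAt (fun w => H w * f w) (-(h u) * f u + H u * deriv f u) (Ioi u) u := by
      intro u hu
      exact (hHd u hu).mul ((hfd u ⟨hu.1.le, hu.2.le⟩).hasDerivWithinAt)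
    have hsub2 : Icc x y ⊆ Icc θl θb := fun u hu =>
      ⟨hx.le.trans hu.1, hu.2.trans hyb.le⟩
    have p1 : IntervalIntegrable (fun u => -(h u) * f u) volume x y :=
      ((hint_h x y).neg).mul_continuousOn (by rw [uIcc_of_le hxy]; exact hfcont)
    have p2 : IntervalIntegrable (fun u => H u * deriv f u) volume x y :=
      ContinuousOn.intervalIntegrable
        (by rw [uIcc_of_le hxy]; exact (Hcont.mono hsub2).mul hf'cont)
    have hcontK : ContinuousOn (fun w => H w * f w) (Icc x y) :=
      (Hcont.mono hsub2).mul hfcont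
    have hftc : ∫ u in x..y, (-(h u) * f u + H u * deriv f u)
        = H y * f y - H x * f x :=
      intervalIntegral.integral_eq_sub_of_hasDeriv_right_of_le hxy hcontK hKd (p1.add p2)
    have hsplit : ∫ u in x..y, (-(h u) * f u + H u * deriv f u)
        = (∫ u in x..y, -(h u) * f u) + ∫ u in x..y, H u * deriv f u :=
      intervalIntegral.integral_add p1 p2
    have hneg : (∫ u in x..y, -(h u) * f u) = -∫ u in x..y, h u * f u := by
      rw [← intervalIntegral.integral_neg]
      congr 1
      ext u
      ring
    have hHf'_nonneg : 0 ≤ ∫ u in x..y, H u * deriv f u :=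
      intervalIntegral.integral_nonneg hxy
        (fun u hu => mul_nonneg (HA u (hsub2 hu)) (hf'0 u hu))
    have hHx : 0 ≤ H x * f x :=
      mul_nonneg (HA x hxmem) (hf0 x ⟨hxmem.1, hxmem.2.trans hbh⟩)
    have hHyb : H y * f y ≤ H y * f θb :=
      mul_le_mul_of_nonneg_left (hmono hymem ⟨hlb, le_rfl⟩ hymem.2) (HA y hymem)
    linarith [hftc, hsplit, hneg, hHf'_nonneg, hHx, hHyb]
  -- step C : limit over exhausting intervals
  set δ : ℝ := (θb - θl) / 2 with hδdef
  have hδ : 0 < δ := by simp only [hδdef]; linarith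
  set xs : ℕ → ℝ := fun n => θl + δ / (n + 1) with hxs
  set ys : ℕ → ℝ := fun n => θb - δ / (n + 1) with hys
  have hdpos : ∀ n : ℕ, 0 < δ / ((n : ℝ) + 1) := fun n =>
    div_pos hδ (by positivity)
  have hdle : ∀ n : ℕ, δ / ((n : ℝ) + 1) ≤ δ := fun n => by
    rw [div_le_iff₀ (by positivity : (0:ℝ) < (n : ℝ) + 1)]
    nlinarith [hδ.le, Nat.cast_nonneg (α := ℝ) n]
  have hxy : ∀ n : ℕ, xs n ≤ ys n := by
    intro n
    have h1 := hdle n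
    simp only [hxs, hys, hδdef] at *
    linarith
  have hxl : ∀ n, θl < xs n := fun n => by
    simp only [hxs]; linarith [hdpos n]
  have hyb : ∀ n, ys n < θb := fun n => by
    simp only [hys]; linarith [hdpos n]
  set S : ℕ → Set ℝ := fun n => Ioc (xs n) (ys n) with hS
  have hSmono : Monotone S := by
    intro m n hmn
    have hd2 : δ / ((n:ℝ) + 1) ≤ δ / ((m:ℝ) + 1) := by
      apply div_le_div_of_nonneg_left hδ.le (by positivity)
      exact_mod_cast Nat.succ_le_succ hmn
    apply Ioc_subset_Ioc <;> simp only [hxs, hys] <;> linarith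
  have hunion : (⋃ n, S n) = Ioo θl θb := by
    ext t
    simp only [mem_iUnion, hS, mem_Ioc, mem_Ioo]
    constructor
    · rintro ⟨n, h1, h2⟩
      exact ⟨(hxl n).trans h1, h2.trans_lt (hyb n)⟩
    · rintro ⟨h1, h2⟩
      set ε : ℝ := min (t - θl) (θb - t) with hε
      have hεpos : 0 < ε := lt_min (by linarith) (by linarith)
      obtain ⟨n, hn⟩ := exists_nat_one_div_lt (div_pos hεpos hδ)
      have hkey : δ / ((n:ℝ) + 1) < ε := by
        calc δ / ((n:ℝ)+1) = δ * (1/((n:ℝ)+1)) := by rw [mul_one_div]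
          _ < δ * (ε/δ) := by exact mul_lt_mul_of_pos_left hn hδ
          _ = ε := by field_simp
      refine ⟨n, ?_, ?_⟩
      · have hεle : ε ≤ t - θl := min_le_left _ _
        simp only [hxs]; linarith
      · have hεle : ε ≤ θb - t := min_le_right _ _
        simp only [hys]; linarith
  have htend : Tendsto (fun n => ∫ t in S n, h t * f t) atTop
      (𝓝 (∫ t in Ioo θl θb, h t * f t)) := by
    have := tendsto_setIntegral_of_monotone (fun n => measurableSet_Ioc) hSmono
      (by rw [hunion]; exact hfi)
    rwa [hunion] at this
  -- convergence of the lower bounds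
  have hys_tend : Tendsto ys atTop (𝓝 θb) := by
    have h1 : Tendsto (fun n : ℕ => δ / ((n:ℝ) + 1)) atTop (𝓝 0) := by
      have := tendsto_one_div_add_atTop_nhds_zero_nat (𝕜 := ℝ)
      have h2 := this.const_mul δ
      simp only [mul_one_div] at h2
      simpa using h2
    have := (tendsto_const_nhds (x := θb) (f := atTop (α := ℕ))).sub h1
    simpa using this
  have hys_mem : ∀ n, ys n ∈ Icc θl θb := fun n =>
    ⟨le_trans (hxl n).le (hxy n), (hyb n).le⟩
  have hHy_tend : Tendsto (fun n => H (ys n)) atTop (𝓝 0) := by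
    have h1 : Tendsto ys atTop (𝓝[Icc θl θb] θb) := by
      rw [tendsto_nhdsWithin_iff]
      exact ⟨hys_tend, Eventually.of_forall hys_mem⟩
    have h2 := (Hcont.continuousWithinAt ⟨hlb, le_rfl⟩).tendsto.comp h1
    have hH0 : H θb = 0 := intervalIntegral.integral_same
    rwa [hH0] at h2
  have hlow_tend : Tendsto (fun n => -(H (ys n) * f θb)) atTop (𝓝 0) := by
    have := (hHy_tend.mul_const (f θb)).neg
    simpa using this
  refine le_of_tendsto_of_tendsto' hlow_tend htend ?_
  intro n
  have heq : ∫ t in S n, h t * f t = ∫ t in (xs n)..(ys n), h t * f t :=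
    (intervalIntegral.integral_of_le (hxy n)).symm
  rw [heq]
  exact stepB (xs n) (ys n) (hxl n) (hxy n) (hyb n)

end Prop6
/-- Proposition 6, case `a < 0`: if the high types are irresponsive
(`e̲ = ē` on `[θ_▲, θ̄]`) and `f` is nondecreasing on `[θ̲, θ_▲]`, then full disclosure
Pareto dominates every admissible policy. -/
theorem full_disclosure_only_efficient_neg (ebar θl θh : ℝ) (hebar : 0 < ebar)
    (hθ : θl ≤ θh)
    (π0 : ℝ → ℝ) (a b : ℝ) (ha : a < 0) (π : ℝ → ℝ → ℝ)
    (hπ : ∀ θ e, π θ e = π0 e - θ * (a * e + b))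
    (hπ0C2 : ContDiffOn ℝ 2 π0 (Icc 0 ebar))
    (hπ0conc : StrictConcaveOn ℝ (Icc 0 ebar) π0)
    (hIR : ∀ θ ∈ Icc θl θh, π θ 0 < π θ ebar)
    (f : ℝ → ℝ)
    (hfC1 : ContDiffOn ℝ 1 f (Ioo θl θh))
    (hfpos : ∀ θ ∈ Ioo θl θh, 0 < f θ)
    (hf0 : ∀ θ ∈ Icc θl θh, 0 ≤ f θ)
    (hf1 : (∫ θ in Icc θl θh, f θ) = 1)
    (hint : ∀ d : ℝ → ℝ, Admissible ebar θl θh π d →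
        IntegrableOn (fun θ => profitFn ebar π d θ * f θ) (Icc θl θh) ∧
        IntegrableOn (fun θ => emissionFn ebar π d θ * f θ) (Icc θl θh))
    (elow : ℝ → ℝ)
    (helow : ∀ θ ∈ Icc θl θh,
        IsLeast {e ∈ Icc (0:ℝ) ebar | π θ ebar ≤ π θ e} (elow θ))
    (θblack : ℝ) (hθblack : θblack ∈ Icc θl θh)
    (hirr : ∀ θ ∈ Icc θblack θh, elow θ = ebar)
    (hmono : MonotoneOn f (Icc θl θblack)) :
    (∀ d : ℝ → ℝ, Admissible ebar θl θh π d →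
        ExpProfit ebar θl θh π f d ≤ ExpProfit ebar θl θh π f (fun e => e) ∧
          ExpEmission ebar θl θh π f (fun e => e) ≤ ExpEmission ebar θl θh π f d) ∧
      ∀ d : ℝ → ℝ, Admissible ebar θl θh π d → Efficient ebar θl θh π f d →
        ExpProfit ebar θl θh π f d = ExpProfit ebar θl θh π f (fun e => e) ∧
          ExpEmission ebar θl θh π f d = ExpEmission ebar θl θh π f (fun e => e) := by
  have h0e : (0:ℝ) ≤ ebar := hebar.le
  have hcont0 : ContinuousOn π0 (Icc 0 ebar) := hπ0C2.continuousOn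
  have hadm_id : Admissible ebar θl θh π (fun e => e) :=
    Prop6.admissible_id h0e (Prop6.pi_cont hπ hcont0)
  have htopIsLeast : ∀ θ ∈ Icc θblack θh,
      IsLeast {e | e ∈ Icc (0:ℝ) ebar ∧ π θ ebar ≤ π θ e} ebar := by
    intro θ hθm
    have h1 := helow θ ⟨hθblack.1.trans hθm.1, hθm.2⟩
    rwa [hirr θ hθm] at h1
  have hγtop : ∀ (d' : ℝ → ℝ), Admissible ebar θl θh π d' → ∀ θ ∈ Icc θblack θh,
      emissionFn ebar π d' θ = ebar ∧ profitFn ebar π d' θ = π θ ebar := by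
    intro d' hd' θ hθm
    have hL := Prop6.argmax_top (d := d') h0e (htopIsLeast θ hθm)
    have hmem : θ ∈ Icc θl θh := ⟨hθblack.1.trans hθm.1, hθm.2⟩
    have hLs := Prop6.gamma_spec hπ hπ0conc hd' hmem
    have heq : emissionFn ebar π d' θ = ebar := hLs.unique hL
    refine ⟨heq, ?_⟩
    rw [Prop6.profitFn_eq hLs, heq]
  have key : ∀ d : ℝ → ℝ, Admissible ebar θl θh π d →
      ExpProfit ebar θl θh π f d ≤ ExpProfit ebar θl θh π f (fun e => e) ∧
        ExpEmission ebar θl θh π f (fun e => e) ≤ ExpEmission ebar θl θh π f d := by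
    intro d hd
    have hVle : ∀ θ, profitFn ebar π d θ ≤ profitFn ebar π (fun e => e) θ := by
      intro θ
      apply csSup_le_csSup (Prop6.bddAbove_img (Prop6.pi_cont hπ hcont0 θ))
        ⟨π θ ebar, Set.mem_image_of_mem _ (Prop6.bc_top h0e)⟩
      apply Set.image_mono
      rw [Prop6.bc_id h0e]
      exact Prop6.bc_subset
    constructor
    · apply setIntegral_mono_on (hint d hd).1 (hint _ hadm_id).1 measurableSet_Icc
      intro θ hθm
      exact mul_le_mul_of_nonneg_right (hVle θ) (hf0 θ hθm)
    -- emission part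
    set proj : ℝ → ℝ := fun t => max θl (min t θh) with hproj
    have hproj_mem : ∀ t, proj t ∈ Icc θl θh := fun t =>
      ⟨le_max_left _ _, max_le hθ (min_le_right _ _)⟩
    have hproj_id : ∀ t ∈ Icc θl θh, proj t = t := by
      intro t ht
      simp only [hproj]
      rw [min_eq_left ht.2, max_eq_right ht.1]
    have hprojm : Monotone proj := fun u v huv =>
      max_le_max le_rfl (min_le_min huv le_rfl)
    set γd : ℝ → ℝ := fun t => emissionFn ebar π d (proj t) with hγd
    set γi : ℝ → ℝ := fun t => emissionFn ebar π (fun e => e) (proj t) with hγi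
    have hγdm : Monotone γd := fun u v huv =>
      (Prop6.gamma_monoOn ha hπ hπ0conc hd) (hproj_mem u) (hproj_mem v) (hprojm huv)
    have hγim : Monotone γi := fun u v huv =>
      (Prop6.gamma_monoOn ha hπ hπ0conc hadm_id) (hproj_mem u) (hproj_mem v) (hprojm huv)
    have hγd_eq : ∀ t ∈ Icc θl θh, γd t = emissionFn ebar π d t := by
      intro t ht; simp only [hγd]; rw [hproj_id t ht]
    have hγi_eq : ∀ t ∈ Icc θl θh, γi t = emissionFn ebar π (fun e => e) t := by
      intro t ht; simp only [hγi]; rw [hproj_id t ht]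
    set γdp : ℝ → ℝ := Function.rightLim γd with hγdp
    set γip : ℝ → ℝ := Function.rightLim γi with hγip
    -- step A
    have stepA : ∀ u ∈ Icc θl θblack, 0 ≤ ∫ t in u..θblack, (γdp t - γip t) := by
      intro u hu
      have hub : u ≤ θblack := hu.2
      have hderiv : ∀ s ∈ Ioo u θblack, HasDerivWithinAt
          (fun w => profitFn ebar π (fun e => e) w - profitFn ebar π d w)
          (a * (γdp s - γip s)) (Ioi s) s := by
        intro s hs
        have hsIoo : s ∈ Ioo θl θh :=
          ⟨lt_of_le_of_lt hu.1 hs.1, lt_of_lt_of_le hs.2 hθblack.2⟩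
        have h1 := Prop6.profit_hasDeriv hπ hπ0conc hcont0 hadm_id h0e γi hγi_eq hγim hsIoo
        have h2 := Prop6.profit_hasDeriv hπ hπ0conc hcont0 hd h0e γd hγd_eq hγdm hsIoo
        have h3 := h1.sub h2
        have e : a * (γdp s - γip s)
            = -(a * Function.rightLim γi s + b) - -(a * Function.rightLim γd s + b) := by
          rw [hγdp, hγip]
          ring
        rw [e]
        exact h3
      have hWcont : ContinuousOn
          (fun w => profitFn ebar π (fun e => e) w - profitFn ebar π d w) (Icc u θblack) :=
        ((Prop6.profit_contOn hπ hπ0conc hcont0 hadm_id h0e).sub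
          (Prop6.profit_contOn hπ hπ0conc hcont0 hd h0e)).mono
          (Icc_subset_Icc hu.1 hθblack.2)
      have hintg : IntervalIntegrable (fun s => a * (γdp s - γip s)) volume u θblack :=
        ((hγdm.rightLim.intervalIntegrable).sub (hγim.rightLim.intervalIntegrable)).const_mul a
      have hftc := intervalIntegral.integral_eq_sub_of_hasDeriv_right_of_le hub hWcont
        hderiv hintg
      have hmul : ∫ t in u..θblack, a * (γdp t - γip t)
          = a * ∫ t in u..θblack, (γdp t - γip t) := intervalIntegral.integral_const_mul _ _
      have hWb : profitFn ebar π (fun e => e) θblack - profitFn ebar π d θblack = 0 := by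
        have t1 := (hγtop _ hadm_id θblack ⟨le_rfl, hθblack.2⟩).2
        have t2 := (hγtop d hd θblack ⟨le_rfl, hθblack.2⟩).2
        rw [t1, t2, sub_self]
      have huIcc : u ∈ Icc θl θh := ⟨hu.1, hu.2.trans hθblack.2⟩
      have hWu : 0 ≤ profitFn ebar π (fun e => e) u - profitFn ebar π d u :=
        sub_nonneg.2 (hVle u)
      rw [hmul, hWb] at hftc
      by_contra hneg
      push_neg at hneg
      have hpos : 0 < a * ∫ t in u..θblack, (γdp t - γip t) :=
        mul_pos_of_neg_of_neg ha hneg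
      linarith
    -- right continuity
    have hrc1 : ∀ u, ContinuousWithinAt γdp (Ici u) u := fun u =>
      hγdm.stieltjesFunction.right_continuous u
    have hrc2 : ∀ u, ContinuousWithinAt γip (Ici u) u := fun u =>
      hγim.stieltjesFunction.right_continuous u
    -- a.e. identification
    have haept : ∀ᵐ t ∂(volume : Measure ℝ), t ∈ Ioo θl θblack →
        (emissionFn ebar π d t * f t - emissionFn ebar π (fun e => e) t * f t)
          = (γdp t - γip t) * f t := by
      have hNc : ({t : ℝ | ¬ContinuousAt γd t} ∪ {t : ℝ | ¬ContinuousAt γi t}).Countable :=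
        (hγdm.countable_not_continuousAt).union (hγim.countable_not_continuousAt)
      filter_upwards [hNc.ae_notMem volume] with t htN htm
      simp only [Set.mem_union, Set.mem_setOf_eq, not_or, not_not] at htN
      have htIcc : t ∈ Icc θl θh := ⟨htm.1.le, htm.2.le.trans hθblack.2⟩
      have e1 : γdp t = γd t :=
        hγdm.continuousWithinAt_Ioi_iff_rightLim_eq.1 (htN.1.continuousWithinAt)
      have e2 : γip t = γi t :=
        hγim.continuousWithinAt_Ioi_iff_rightLim_eq.1 (htN.2.continuousWithinAt)
      rw [e1, e2, hγd_eq t htIcc, hγi_eq t htIcc]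
      ring
    have base : IntegrableOn (fun θ => emissionFn ebar π d θ * f θ
        - emissionFn ebar π (fun e => e) θ * f θ) (Icc θl θh) :=
      (hint d hd).2.sub (hint _ hadm_id).2
    have hfi' : IntegrableOn (fun t => (γdp t - γip t) * f t) (Ioo θl θblack) := by
      have base2 := base.mono_set
        (fun t (ht : t ∈ Ioo θl θblack) =>
          (⟨ht.1.le, ht.2.le.trans hθblack.2⟩ : t ∈ Icc θl θh))
      exact base2.congr ((ae_restrict_iff' measurableSet_Ioo).2 haept)
    have stepC : 0 ≤ ∫ t in Ioo θl θblack, (γdp t - γip t) * f t :=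
      Prop6.key_integral_nonneg γdp γip f hγdm.rightLim hγim.rightLim hrc1 hrc2
        hθblack.1 hθblack.2 hfC1 hf0 hmono hfi' stepA
    -- assembly
    have hsecond : ∫ θ in Ioc θblack θh, (emissionFn ebar π d θ * f θ
        - emissionFn ebar π (fun e => e) θ * f θ) = 0 := by
      rw [setIntegral_congr_fun measurableSet_Ioc (g := fun _ => (0:ℝ)) ?_]
      · simp
      · intro θ hθm
        have h1 := (hγtop d hd θ ⟨hθm.1.le, hθm.2⟩).1
        have h2 := (hγtop _ hadm_id θ ⟨hθm.1.le, hθm.2⟩).1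
        simp only [h1, h2, sub_self, Pi.zero_apply]
    have hfirst : 0 ≤ ∫ θ in Ioc θl θblack, (emissionFn ebar π d θ * f θ
        - emissionFn ebar π (fun e => e) θ * f θ) := by
      rw [integral_Ioc_eq_integral_Ioo,
        setIntegral_congr_ae measurableSet_Ioo haept]
      exact stepC
    have hsplit : ∫ θ in Icc θl θh, (emissionFn ebar π d θ * f θ
          - emissionFn ebar π (fun e => e) θ * f θ)
        = (∫ θ in Ioc θl θblack, (emissionFn ebar π d θ * f θ
            - emissionFn ebar π (fun e => e) θ * f θ))
          + ∫ θ in Ioc θblack θh, (emissionFn ebar π d θ * f θ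
            - emissionFn ebar π (fun e => e) θ * f θ) := by
      rw [integral_Icc_eq_integral_Ioc, ← Set.Ioc_union_Ioc_eq_Ioc hθblack.1 hθblack.2]
      apply setIntegral_union (Set.Ioc_disjoint_Ioc_of_le le_rfl) measurableSet_Ioc
      · exact base.mono_set (fun t ht => ⟨ht.1.le, ht.2.trans hθblack.2⟩)
      · exact base.mono_set (fun t ht => ⟨hθblack.1.trans ht.1.le, ht.2⟩)
    have hnn : 0 ≤ ∫ θ in Icc θl θh, (emissionFn ebar π d θ * f θ
        - emissionFn ebar π (fun e => e) θ * f θ) := by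
      rw [hsplit, hsecond]
      linarith
    have hsub := integral_sub (hint d hd).2 (hint _ hadm_id).2
    simp only [ExpEmission]
    rw [hsub] at hnn
    linarith
  refine ⟨key, ?_⟩
  intro d hd heff
  have h1 := key d hd
  constructor
  · exact le_antisymm h1.1
      (not_lt.1 fun hlt => heff ⟨_, hadm_id, h1.1, h1.2, Or.inl hlt⟩)
  · exact le_antisymm
      (not_lt.1 fun hlt => heff ⟨_, hadm_id, h1.1, h1.2, Or.inr hlt⟩) h1.2
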